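/- arXiv:2001.04237 — 2 statements merged into one kernel-verified Lean document; each statement's English description precedes it below -/
import Mathlib

section
/- Let μ, ν be natural numbers with 0 ≤ ν ≤ μ, and let α be the sequence α_s = (μ-ν+1)/(s+μ+1). Then the weights of the α-average satisfy \hat{α}^{(n)}_1 = C(n+ν-1, n-1)/C(n+μ, n-1) and \hat{α}^{(n)}_r = ((μ-ν+1)/(r+μ)) · C(n+ν-1, n-r)/C(n+μ, n-r) for 2 ≤ r ≤ n, where C(a,b) denotes the binomial coefficient. -/
open Finset

lemma prod_ratio (μ ν r : ℕ) (hr : 1 ≤ r) :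
    ∀ m, r - 1 ≤ m →
      (∏ s ∈ Finset.Icc r m, ((s : ℝ) + ν) / ((s : ℝ) + μ + 1))
        = ((m + ν).choose (m + 1 - r) : ℝ) / ((m + μ + 1).choose (m + 1 - r) : ℝ) := by
  refine Nat.le_induction ?_ ?_
  · have h1 : Finset.Icc r (r - 1) = ∅ := by
      rw [Finset.Icc_eq_empty_iff]
      omega
    have h2 : r - 1 + 1 - r = 0 := by omega
    simp [h1, h2]
  · intro m hm ih
    have hrm : r ≤ m + 1 := by omega
    rw [Finset.prod_Icc_succ_top hrm, ih]
    have hk : m + 1 + 1 - r = (m + 1 - r) + 1 := by omega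
    set k := m + 1 - r with hkdef
    rw [hk]
    have hA : ((m + ν + 1).choose (k + 1)) * (k + 1) = (m + ν + 1) * ((m + ν).choose k) := by
      have := Nat.add_one_mul_choose_eq (m + ν) k
      simpa [Nat.succ_eq_add_one, mul_comm] using this.symm
    have hB : ((m + μ + 1 + 1).choose (k + 1)) * (k + 1)
        = (m + μ + 1 + 1) * ((m + μ + 1).choose k) := by
      have := Nat.add_one_mul_choose_eq (m + μ + 1) k
      simpa [Nat.succ_eq_add_one, mul_comm] using this.symm
    have eA : m + 1 + ν = m + ν + 1 := by omega
    have eB : m + 1 + μ + 1 = m + μ + 1 + 1 := by omega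
    rw [eA, eB]
    have hA' : (((m + ν + 1).choose (k + 1) : ℝ)) * (k + 1) = (m + ν + 1) * ((m + ν).choose k) := by
      exact_mod_cast congrArg (Nat.cast : ℕ → ℝ) hA
    have hB' : (((m + μ + 1 + 1).choose (k + 1) : ℝ)) * (k + 1)
        = (m + μ + 1 + 1) * ((m + μ + 1).choose k) := by
      exact_mod_cast congrArg (Nat.cast : ℕ → ℝ) hB
    have p1 : 0 < (m + ν).choose k := Nat.choose_pos (by omega)
    have p2 : 0 < (m + μ + 1).choose k := Nat.choose_pos (by omega)
    have p3 : 0 < (m + μ + 1 + 1).choose (k + 1) := Nat.choose_pos (by omega)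
    have q1 : ((m + ν).choose k : ℝ) ≠ 0 := by positivity
    have q2 : ((m + μ + 1).choose k : ℝ) ≠ 0 := by exact_mod_cast p2.ne'
    have q3 : ((m + μ + 1 + 1).choose (k + 1) : ℝ) ≠ 0 := by exact_mod_cast p3.ne'
    have q5 : ((k : ℝ) + 1) ≠ 0 := by positivity
    have hq1 : ((m + ν).choose k : ℝ) ≠ 0 := by exact_mod_cast p1.ne'
    rw [div_mul_div_comm, div_eq_div_iff (by positivity) (by positivity)]
    push_cast at hA' hB' ⊢
    nlinarith [hA', hB', mul_pos (mul_pos (Nat.cast_pos.mpr p1 : (0:ℝ) < _) (Nat.cast_pos.mpr p2)) (Nat.cast_pos.mpr p3)]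

/-- For the weight sequence α_s = (μ-ν+1)/(s+μ+1) with naturals ν ≤ μ,
the weights of the α-average are
α̂⁽ⁿ⁾₁ = C(n+ν-1, n-1)/C(n+μ, n-1) and
α̂⁽ⁿ⁾_r = ((μ-ν+1)/(r+μ)) · C(n+ν-1, n-r)/C(n+μ, n-r) for 2 ≤ r ≤ n. -/
theorem alpha_average_binomial_weights
    (μ ν : ℕ) (hνμ : ν ≤ μ)
    (α : ℕ → ℝ) (hαdef : ∀ s, α s = ((μ : ℝ) - ν + 1) / ((s : ℝ) + μ + 1)) :
    ∀ n, 1 ≤ n →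
      (∏ s ∈ Finset.Icc 1 (n - 1), (1 - α s))
          = ((n + ν - 1).choose (n - 1) : ℝ) / ((n + μ).choose (n - 1) : ℝ)
      ∧ ∀ r, 2 ≤ r → r ≤ n →
          α (r - 1) * ∏ s ∈ Finset.Icc r (n - 1), (1 - α s)
            = ((μ : ℝ) - ν + 1) / ((r : ℝ) + μ)
              * (((n + ν - 1).choose (n - r) : ℝ) / ((n + μ).choose (n - r) : ℝ)) := by
  intro n hn
  have hfac : ∀ s : ℕ, 1 - α s = ((s : ℝ) + ν) / ((s : ℝ) + μ + 1) := by
    intro s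
    rw [hαdef s]
    have : ((s : ℝ) + μ + 1) ≠ 0 := by positivity
    field_simp
    ring
  obtain ⟨m, rfl⟩ : ∃ m, n = m + 1 := ⟨n - 1, by omega⟩
  constructor
  · have := prod_ratio μ ν 1 le_rfl m (by omega)
    simp only [hfac]
    rw [show m + 1 + ν - 1 = m + ν from by omega, show m + 1 + μ = m + μ + 1 from by omega]
    simpa using this
  · intro r hr2 hrn
    have := prod_ratio μ ν r (by omega) m (by omega)
    simp only [hfac]
    rw [show m + 1 - 1 = m from rfl, this, hαdef]
    have hc1 : m + ν = m + 1 + ν - 1 := by omega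
    have hc2 : m + 1 - r = m + 1 - r := rfl
    have hcast : ((r - 1 : ℕ) : ℝ) = (r : ℝ) - 1 := by
      have : (1:ℕ) ≤ r := by omega
      push_cast [this]; ring
    rw [hcast]
    have h1 : (m + 1 + ν - 1) = m + ν := by omega
    have h2 : (m + 1 + μ) = m + μ + 1 := by omega
    rw [h1, h2]
    ring_nf
end

section
/- Let 0 < α < 1, let N ≥ 1, and let y = (y_0, y_1, y_2, ...) be a bounded real sequence with limit exponential average \bar{δ} = α ∑_{s=0}^{∞} (1-α)^s y_s and limit N-moving exponential average \bar{Δ}^N = (1-α)^{N-1} y_{N-1} + α ∑_{s=0}^{N-2} (1-α)^s y_s. Assume y is admissible in the sense that \bar{δ} > 0, α ∑_{s=0}^{∞} (1-α)^s y_{N+s} = \bar{δ}, and |\bar{δ} - y_{N-1}| < \bar{δ}. Then |\bar{δ} - \bar{Δ}^N| / \bar{δ} < (1-α)^N. -/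
/-- For 0 < α < 1, N ≥ 1 and a bounded admissible sequence y (i.e. the
limit exponential average δ̄ = α∑_{s=0}^∞ (1-α)^s y_s is positive, the tail exponential
average α∑_{s=0}^∞ (1-α)^s y_{N+s} equals δ̄, and |δ̄ - y_{N-1}| < δ̄), the limit
N-moving exponential average Δ̄^N = (1-α)^{N-1} y_{N-1} + α∑_{s=0}^{N-2} (1-α)^s y_s
satisfies |δ̄ - Δ̄^N| / δ̄ < (1-α)^N. -/
theorem ea_mea_relative_error
    (α : ℝ) (hα0 : 0 < α) (hα1 : α < 1)
    (N : ℕ) (hN : 1 ≤ N)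
    (y : ℕ → ℝ) (hy : ∃ C, ∀ s, |y s| ≤ C)
    (δbar : ℝ) (hδbar : δbar = α * ∑' s : ℕ, (1 - α) ^ s * y s)
    (Δbar : ℝ)
    (hΔbar : Δbar = (1 - α) ^ (N - 1) * y (N - 1)
        + α * ∑ s ∈ Finset.range (N - 1), (1 - α) ^ s * y s)
    (hpos : 0 < δbar)
    (htail : α * (∑' s : ℕ, (1 - α) ^ s * y (N + s)) = δbar)
    (hclose : |δbar - y (N - 1)| < δbar) :
    |δbar - Δbar| / δbar < (1 - α) ^ N := by
  obtain ⟨C, hC⟩ := hy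
  have hr0 : (0:ℝ) ≤ 1 - α := by linarith
  have hr1 : 1 - α < 1 := by linarith
  have hsum : Summable (fun s : ℕ => (1 - α) ^ s * y s) := by
    apply Summable.of_norm_bounded (g := fun s => C * (1 - α) ^ s)
      ((summable_geometric_of_lt_one hr0 hr1).mul_left C)
    intro s
    rw [norm_mul, norm_pow, Real.norm_eq_abs, Real.norm_eq_abs, abs_of_nonneg hr0]
    calc (1-α)^s * |y s| ≤ (1-α)^s * C :=
          mul_le_mul_of_nonneg_left (hC s) (pow_nonneg hr0 s)
      _ = C * (1-α)^s := mul_comm _ _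
  have hsplit := (hsum.sum_add_tsum_nat_add N).symm
  have htaileq : (∑' s : ℕ, (1 - α) ^ (s + N) * y (s + N))
      = (1 - α) ^ N * ∑' s : ℕ, (1 - α) ^ s * y (N + s) := by
    rw [← tsum_mul_left]
    exact tsum_congr fun s => by rw [add_comm s N, pow_add]; ring
  obtain ⟨n, rfl⟩ : ∃ n, N = n + 1 := ⟨N - 1, (Nat.succ_pred_eq_of_pos hN).symm⟩
  have hn : n + 1 - 1 = n := rfl
  rw [hn] at hΔbar hclose
  have hδeq : δbar = α * (∑ s ∈ Finset.range (n+1), (1 - α) ^ s * y s)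
      + (1 - α) ^ (n+1) * (α * ∑' s : ℕ, (1 - α) ^ s * y (n + 1 + s)) := by
    rw [hδbar, hsplit, htaileq]; ring
  rw [htail, Finset.sum_range_succ] at hδeq
  have key : δbar - Δbar = (1 - α) ^ (n+1) * (δbar - y n) := by
    rw [hΔbar]; linear_combination hδeq
  rw [key, abs_mul, abs_of_nonneg (pow_nonneg hr0 (n+1)), div_lt_iff₀ hpos]
  exact (mul_lt_mul_iff_right₀ (pow_pos (by linarith) (n+1))).2 hclose
end
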